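/- Let (a_k)_{k≥0} be a nondecreasing sequence in (0,1] with lim_{k→∞} a_k = 1. If there exist constants C > 0 and λ ∈ (0,1) such that 1 − a_n ≤ C λ^n for all n ≥ 0, then there exist constants C′ > 0 and λ′ ∈ (0,1) such that ρ_n ≤ C′ (λ′)^n for all n ≥ 1. -/

import Mathlib

open MeasureTheory Filter

/-- House-of-cards chain: `hoc a u m k` is `W^m_{m+k}`. -/
noncomputable def hoc (a : ℕ → ℝ) (u : ℤ → ℝ) (m : ℤ) : ℕ → ℕ
  | 0 => 0
  | k + 1 => if u (m + k + 1) < a (hoc a u m k) then hoc a u m k + 1 else 0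

/-- Return probability `ρ_k := ℙ(W^0_k = 0)`. -/
noncomputable def rho (a : ℕ → ℝ) (μ : Measure (ℤ → ℝ)) (k : ℕ) : ENNReal :=
  μ {u | hoc a u 0 k = 0}

/-- The coordinates are i.i.d. uniform on `[0,1)` under `μ`. -/
def IsIIDUniform (μ : Measure (ℤ → ℝ)) : Prop :=
  ProbabilityTheory.iIndepFun
    (fun i (u : ℤ → ℝ) => u i) μ ∧
  ∀ i : ℤ, μ.map (fun u => u i) = volume.restrict (Set.Ico (0:ℝ) 1)



lemma hoc_succ (a : ℕ → ℝ) (u : ℤ → ℝ) (k : ℕ) :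
    hoc a u 0 (k+1) = if u ((k:ℤ) + 1) < a (hoc a u 0 k) then hoc a u 0 k + 1 else 0 := by
  show (if u (0 + (k:ℤ) + 1) < a (hoc a u 0 k) then hoc a u 0 k + 1 else 0) = _
  norm_num

lemma hoc_le (a : ℕ → ℝ) (u : ℤ → ℝ) (k : ℕ) : hoc a u 0 k ≤ k := by
  induction k with
  | zero => exact le_refl 0
  | succ k ih =>
    rw [hoc_succ]
    split
    · omega
    · omega

lemma hoc_rewind (a : ℕ → ℝ) (u : ℤ → ℝ) (k : ℕ) :
    ∀ i ≤ hoc a u 0 k, hoc a u 0 (k - i) = hoc a u 0 k - i ∧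
      (∀ i' < i, u ((k:ℤ) - i') < a (hoc a u 0 k - i' - 1)) := by
  intro i
  induction i with
  | zero => intro _; exact ⟨by simp, by omega⟩
  | succ i ih =>
    intro hi
    obtain ⟨h1, h2⟩ := ih (by omega)
    have hm := hoc_le a u k
    have hki : 1 ≤ k - i := by omega
    have hstep : hoc a u 0 ((k - i - 1) + 1) = hoc a u 0 k - i := by
      rw [show (k - i - 1) + 1 = k - i by omega, h1]
    rw [hoc_succ] at hstep
    have hpos : 0 < hoc a u 0 k - i := by omega
    by_cases hc : u (((k - i - 1 : ℕ) :ℤ) + 1) < a (hoc a u 0 (k - i - 1))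
    · rw [if_pos hc] at hstep
      have e1 : hoc a u 0 (k - (i+1)) = hoc a u 0 k - (i+1) := by
        rw [show k - (i+1) = k - i - 1 by omega]; omega
      refine ⟨e1, ?_⟩
      intro i' hi'
      rcases Nat.lt_succ_iff_lt_or_eq.mp hi' with h | h
      · exact h2 i' h
      · rw [h]
        have e3 : ((k - i - 1 : ℕ) : ℤ) + 1 = (k : ℤ) - (i:ℤ) := by omega
        rw [e3] at hc
        have e4 : hoc a u 0 (k - i - 1) = hoc a u 0 k - i - 1 := by omega
        rwa [e4] at hc
    · rw [if_neg hc] at hstep; omega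

lemma hoc_cover (a : ℕ → ℝ) (u : ℤ → ℝ) (n : ℕ) (hn : 1 ≤ n) (h0 : hoc a u 0 n = 0) :
    ∃ j < n, hoc a u 0 j = 0 ∧ (∀ i : ℕ, j < i → i < n → u (i:ℤ) < a (i - j - 1)) ∧
      a (n - 1 - j) ≤ u (n:ℤ) := by
  set m := hoc a u 0 (n-1) with hm
  have hmle : m ≤ n - 1 := hoc_le a u (n-1)
  refine ⟨n - 1 - m, by omega, ?_, ?_, ?_⟩
  · have := (hoc_rewind a u (n-1) m le_rfl).1
    rw [Nat.sub_self] at this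
    convert this using 2
  · intro i hji hin
    have hi' : n - 1 - i < m := by omega
    have := (hoc_rewind a u (n-1) m le_rfl).2 (n - 1 - i) hi'
    have e1 : ((n-1:ℕ):ℤ) - ((n - 1 - i : ℕ):ℤ) = (i:ℤ) := by omega
    rw [e1] at this
    have e2 : m - (n - 1 - i) - 1 = i - (n - 1 - m) - 1 := by omega
    rwa [e2] at this
  · have hs : hoc a u 0 ((n-1) + 1) = 0 := by rw [show n - 1 + 1 = n by omega]; exact h0
    rw [hoc_succ] at hs
    by_cases hc : u (((n-1:ℕ):ℤ) + 1) < a m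
    · rw [if_pos hc] at hs; omega
    · rw [if_neg hc] at hs
      have e1 : ((n-1:ℕ):ℤ) + 1 = (n:ℤ) := by omega
      rw [e1] at hc
      have e2 : n - 1 - (n - 1 - m) = m := by omega
      rw [e2]
      exact le_of_not_gt hc

lemma hoc_congr (a : ℕ → ℝ) (u v : ℤ → ℝ) (k : ℕ)
    (h : ∀ i : ℕ, 1 ≤ i → i ≤ k → u (i:ℤ) = v (i:ℤ)) : hoc a u 0 k = hoc a v 0 k := by
  induction k with
  | zero => rfl
  | succ k ih =>
    have ih' := ih (fun i h1 h2 => h i h1 (by omega))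
    rw [hoc_succ, hoc_succ, ih']
    have : u ((k:ℤ)+1) = v ((k:ℤ)+1) := by
      have := h (k+1) (by omega) le_rfl
      push_cast at this
      exact this
    rw [this]

lemma measurable_hoc (a : ℕ → ℝ) (k : ℕ) : Measurable (fun u : ℤ → ℝ => hoc a u 0 k) := by
  induction k with
  | zero => exact measurable_const
  | succ k ih =>
    have hF : Measurable (fun p : ℝ × ℕ => if p.1 < a p.2 then p.2 + 1 else 0) := by
      apply measurable_from_prod_countable_left
      intro m
      show Measurable fun x : ℝ => if x < a m then m + 1 else 0
      exact Measurable.ite measurableSet_Iio measurable_const measurable_const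
    have : (fun u : ℤ → ℝ => hoc a u 0 (k+1)) =
        (fun p : ℝ × ℕ => if p.1 < a p.2 then p.2 + 1 else 0) ∘
          (fun u => (u ((k:ℤ)+1), hoc a u 0 k)) := by
      funext u; simp [hoc_succ]
    rw [this]
    exact hF.comp ((measurable_pi_apply _).prodMk ih)



section analytic
variable (a : ℕ → ℝ) (C l : ℝ)

noncomputable def Pc : ℝ := Real.exp (-(C / (a 0 * (1 - l))))

lemma Pc_pos : 0 < Pc a C l := Real.exp_pos _

lemma Pc_le_one (ha : ∀ k, a k ∈ Set.Ioc (0:ℝ) 1) (hC : 0 < C) (hl : l ∈ Set.Ioo (0:ℝ) 1) :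
    Pc a C l ≤ 1 := by
  obtain ⟨hl1, hl2⟩ := hl
  apply Real.exp_le_one_iff.mpr
  have h0 : 0 < a 0 := (ha 0).1
  have h1 : 0 < 1 - l := by linarith
  have : 0 ≤ C / (a 0 * (1 - l)) := by positivity
  linarith

lemma prod_lower (ha : ∀ k, a k ∈ Set.Ioc (0:ℝ) 1) (hmono : Monotone a)
    (hC : 0 < C) (hl : l ∈ Set.Ioo (0:ℝ) 1) (hexp : ∀ n : ℕ, 1 - a n ≤ C * l ^ n)
    (n : ℕ) : Pc a C l ≤ ∏ t ∈ Finset.range n, a t := by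
  obtain ⟨hl1, hl2⟩ := hl
  have ha0 : 0 < a 0 := (ha 0).1
  have hprod : ∏ t ∈ Finset.range n, a t
      = Real.exp (∑ t ∈ Finset.range n, Real.log (a t)) := by
    rw [Real.exp_sum]
    exact Finset.prod_congr rfl (fun t _ => (Real.exp_log (ha t).1).symm)
  rw [hprod]
  apply Real.exp_le_exp.mpr
  have hterm : ∀ t : ℕ, -(C / a 0 * l ^ t) ≤ Real.log (a t) := by
    intro t
    have hat := ha t
    have h1 : Real.log (a t) = - Real.log (a t)⁻¹ := by rw [Real.log_inv]; ring
    have h2 : Real.log (a t)⁻¹ ≤ (a t)⁻¹ - 1 :=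
      Real.log_le_sub_one_of_pos (inv_pos.mpr hat.1)
    have h3 : (1 - a t) / a t = (a t)⁻¹ - 1 := by
      rw [sub_div, div_self (ne_of_gt hat.1), one_div]
    have key : (1 - a t) / a t ≤ (C * l ^ t) / a 0 := by
      rw [div_le_div_iff₀ hat.1 ha0]
      have hm := hmono (Nat.zero_le t)
      have hd : 0 ≤ C * l ^ t := by positivity
      nlinarith [hexp t, hat.2]
    have e : C / a 0 * l ^ t = C * l ^ t / a 0 := by ring
    linarith
  have hgeo : ∑ t ∈ Finset.range n, l ^ t ≤ (1 - l)⁻¹ := by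
    have h := Summable.sum_le_tsum (Finset.range n) (fun t _ => by positivity)
      (summable_geometric_of_lt_one hl1.le hl2)
    rwa [tsum_geometric_of_lt_one hl1.le hl2] at h
  calc -(C / (a 0 * (1 - l))) ≤ -(C / a 0 * ∑ t ∈ Finset.range n, l ^ t) := by
        have e : C / (a 0 * (1 - l)) = C / a 0 * (1 - l)⁻¹ := by
          field_simp
        rw [e, neg_le_neg_iff]
        exact mul_le_mul_of_nonneg_left hgeo (by positivity)
    _ = ∑ t ∈ Finset.range n, -(C / a 0 * l ^ t) := by
        rw [Finset.mul_sum, ← Finset.sum_neg_distrib]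
    _ ≤ ∑ t ∈ Finset.range n, Real.log (a t) := Finset.sum_le_sum (fun t _ => hterm t)
end analytic

section analytic2
variable (a : ℕ → ℝ) (C l : ℝ)

noncomputable def fRa (n : ℕ) : ℝ := (∏ t ∈ Finset.range (n-1), a t) * (1 - a (n-1))

lemma fRa_nonneg (ha : ∀ k, a k ∈ Set.Ioc (0:ℝ) 1) (m : ℕ) : 0 ≤ fRa a m := by
  apply mul_nonneg (Finset.prod_nonneg (fun t _ => (ha t).1.le))
  have := (ha (m-1)).2; linarith

lemma fRa_le (ha : ∀ k, a k ∈ Set.Ioc (0:ℝ) 1) (j : ℕ) : fRa a (j+1) ≤ 1 - a j := by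
  unfold fRa
  simp only [Nat.add_sub_cancel]
  have h1 : ∏ t ∈ Finset.range j, a t ≤ 1 :=
    Finset.prod_le_one (fun t _ => (ha t).1.le) (fun t _ => (ha t).2)
  have h2 : 0 ≤ 1 - a j := by have := (ha j).2; linarith
  nlinarith

lemma telescope (n : ℕ) :
    ∑ j ∈ Finset.range n, fRa a (j+1) = 1 - ∏ t ∈ Finset.range n, a t := by
  have h : ∀ j ∈ Finset.range n, fRa a (j+1)
      = (∏ t ∈ Finset.range j, a t) - (∏ t ∈ Finset.range (j+1), a t) := by
    intro j _
    unfold fRa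
    simp only [Nat.add_sub_cancel, Finset.prod_range_succ]
    ring
  rw [Finset.sum_congr rfl h, Finset.sum_range_sub' (fun j => ∏ t ∈ Finset.range j, a t) n]
  simp

noncomputable def Dc : ℝ := (1 - l)⁻¹ + Pc a C l / (2 * C)
noncomputable def zc : ℝ := Dc a C l / (1 + Dc a C l * l)

lemma zc_facts (ha : ∀ k, a k ∈ Set.Ioc (0:ℝ) 1) (hC : 0 < C) (hl : l ∈ Set.Ioo (0:ℝ) 1) :
    1 < zc a C l ∧ zc a C l * l < 1 ∧
      zc a C l * (1 - zc a C l * l)⁻¹ = Dc a C l := by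
  obtain ⟨hl1, hl2⟩ := hl
  have hP := Pc_pos a C l
  have h1l : 0 < 1 - l := by linarith
  have hD1 : (1 - l)⁻¹ < Dc a C l := by
    unfold Dc
    have : 0 < Pc a C l / (2 * C) := by positivity
    linarith
  have hD0 : 0 < Dc a C l := lt_trans (by positivity) hD1
  have hden : 0 < 1 + Dc a C l * l := by positivity
  have hz1 : 1 < zc a C l := by
    unfold zc
    rw [lt_div_iff₀ hden]
    have h := mul_lt_mul_of_pos_right hD1 h1l
    rw [inv_mul_cancel₀ (ne_of_gt h1l)] at h
    nlinarith
  have hzl : zc a C l * l < 1 := by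
    unfold zc
    rw [div_mul_eq_mul_div, div_lt_one hden]
    nlinarith
  have hzD : zc a C l * (1 - zc a C l * l)⁻¹ = Dc a C l := by
    unfold zc
    have h2 : 1 - Dc a C l / (1 + Dc a C l * l) * l = (1 + Dc a C l * l)⁻¹ * 1 := by
      field_simp
      ring
    rw [h2]
    field_simp
  exact ⟨hz1, hzl, hzD⟩

end analytic2

section analytic3
variable (a : ℕ → ℝ) (C l : ℝ)

lemma keysum (ha : ∀ k, a k ∈ Set.Ioc (0:ℝ) 1) (hmono : Monotone a)
    (hC : 0 < C) (hl : l ∈ Set.Ioo (0:ℝ) 1) (hexp : ∀ n : ℕ, 1 - a n ≤ C * l ^ n)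
    (n : ℕ) :
    ∑ j ∈ Finset.range n, zc a C l ^ (j+1) * fRa a (j+1) ≤ 1 - Pc a C l / 2 := by
  obtain ⟨hz1, hzl, hzD⟩ := zc_facts a C l ha hC hl
  obtain ⟨hl1, hl2⟩ := hl
  set z := zc a C l with hz
  set P := Pc a C l with hP
  have hPpos := Pc_pos a C l
  have hz0 : 0 < z := lt_trans one_pos hz1
  have hzl0 : 0 ≤ z * l := by positivity
  -- split
  have hsplit : ∀ j ∈ Finset.range n, z ^ (j+1) * fRa a (j+1)
      = fRa a (j+1) + (z ^ (j+1) - 1) * fRa a (j+1) := by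
    intro j _; ring
  rw [Finset.sum_congr rfl hsplit, Finset.sum_add_distrib]
  have h1 : ∑ j ∈ Finset.range n, fRa a (j+1) ≤ 1 - P := by
    rw [telescope a n]
    have := prod_lower a C l ha hmono hC ⟨hl1, hl2⟩ hexp n
    linarith
  have h2 : ∑ j ∈ Finset.range n, (z ^ (j+1) - 1) * fRa a (j+1) ≤ P / 2 := by
    have hb : ∀ j ∈ Finset.range n, (z ^ (j+1) - 1) * fRa a (j+1)
        ≤ C * (z * (z*l) ^ j - l ^ j) := by
      intro j _
      have hzj : (1:ℝ) ≤ z ^ (j+1) := one_le_pow₀ hz1.le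
      have hf1 : fRa a (j+1) ≤ C * l ^ j := le_trans (fRa_le a ha j) (hexp j)
      have hf0 : 0 ≤ fRa a (j+1) := fRa_nonneg a ha (j+1)
      have e : C * (z * (z*l) ^ j - l ^ j) = (z ^ (j+1) - 1) * (C * l ^ j) := by
        rw [mul_pow]; ring
      rw [e]
      apply mul_le_mul_of_nonneg_left hf1 (by linarith)
    calc ∑ j ∈ Finset.range n, (z ^ (j+1) - 1) * fRa a (j+1)
        ≤ ∑ j ∈ Finset.range n, C * (z * (z*l) ^ j - l ^ j) :=
          Finset.sum_le_sum hb
      _ = C * ∑ j ∈ Finset.range n, (z * (z*l) ^ j - l ^ j) := by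
          rw [Finset.mul_sum]
      _ ≤ C * (z * (1 - z*l)⁻¹ - (1 - l)⁻¹) := by
          apply mul_le_mul_of_nonneg_left ?_ hC.le
          have hsum : Summable (fun j : ℕ => z * (z*l) ^ j - l ^ j) :=
            ((summable_geometric_of_lt_one hzl0 hzl).mul_left z).sub
              (summable_geometric_of_lt_one hl1.le hl2)
          have hts : ∑' j : ℕ, (z * (z*l) ^ j - l ^ j)
              = z * (1 - z*l)⁻¹ - (1 - l)⁻¹ := by
            rw [Summable.tsum_sub ((summable_geometric_of_lt_one hzl0 hzl).mul_left z)
              (summable_geometric_of_lt_one hl1.le hl2), tsum_mul_left,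
              tsum_geometric_of_lt_one hzl0 hzl, tsum_geometric_of_lt_one hl1.le hl2]
          rw [← hts]
          apply Summable.sum_le_tsum _ _ hsum
          intro j _
          have : (1:ℝ) ≤ z ^ (j+1) := one_le_pow₀ hz1.le
          have e : z * (z*l) ^ j - l ^ j = (z ^ (j+1) - 1) * l ^ j := by
            rw [mul_pow]; ring
          rw [e]
          exact mul_nonneg (by linarith) (by positivity)
      _ = P / 2 := by
          rw [hzD]
          unfold Dc
          rw [← hP]
          field_simp
          ring
  linarith

lemma main_rec (ha : ∀ k, a k ∈ Set.Ioc (0:ℝ) 1) (hmono : Monotone a)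
    (hC : 0 < C) (hl : l ∈ Set.Ioo (0:ℝ) 1) (hexp : ∀ n : ℕ, 1 - a n ≤ C * l ^ n)
    (r : ℕ → ℝ) (hr0 : r 0 = 1) (hrpos : ∀ n, 0 ≤ r n)
    (hrec : ∀ n, 1 ≤ n → r n ≤ ∑ j ∈ Finset.range n, r j * fRa a (n-j)) :
    ∀ n, r n ≤ ((zc a C l)⁻¹) ^ n := by
  obtain ⟨hz1, hzl, hzD⟩ := zc_facts a C l ha hC hl
  set z := zc a C l with hz
  have hz0 : 0 < z := lt_trans one_pos hz1
  have hzne : z ≠ 0 := ne_of_gt hz0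
  intro n
  induction n using Nat.strong_induction_on with
  | _ n ih =>
    match n with
    | 0 => simp [hr0]
    | Nat.succ m =>
      set n := m + 1
      have hn : 1 ≤ n := Nat.le_add_left 1 m
      have step1 : r n ≤ ∑ j ∈ Finset.range n, (z⁻¹) ^ j * fRa a (n-j) := by
        refine le_trans (hrec n hn) (Finset.sum_le_sum ?_)
        intro j hj
        exact mul_le_mul_of_nonneg_right (ih j (Finset.mem_range.mp hj))
          (fRa_nonneg a ha (n-j))
      have step2 : ∑ j ∈ Finset.range n, (z⁻¹) ^ j * fRa a (n-j)
          = ∑ j ∈ Finset.range n, (z⁻¹) ^ (n-1-j) * fRa a (j+1) := by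
        rw [← Finset.sum_range_reflect (fun j => (z⁻¹) ^ (n-1-j) * fRa a (j+1)) n]
        apply Finset.sum_congr rfl
        intro j hj
        rw [Finset.mem_range] at hj
        congr 2 <;> omega
      have step3 : ∀ j ∈ Finset.range n, (z⁻¹) ^ (n-1-j) * fRa a (j+1)
          = (z⁻¹) ^ n * (z ^ (j+1) * fRa a (j+1)) := by
        intro j hj
        rw [Finset.mem_range] at hj
        have e : (z⁻¹) ^ n = (z⁻¹) ^ (n-1-j) * (z⁻¹) ^ (j+1) := by
          rw [← pow_add]
          congr 1
          omega
        rw [e, inv_pow]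
        rw [mul_assoc, inv_pow, inv_mul_cancel_left₀ (pow_ne_zero _ hzne)]
      rw [step2, Finset.sum_congr rfl step3, ← Finset.mul_sum] at step1
      have hkey := keysum a C l ha hmono hC hl hexp n
      have hPpos := Pc_pos a C l
      have hP1 := Pc_le_one a C l ha hC hl
      calc r n ≤ (z⁻¹) ^ n * ∑ j ∈ Finset.range n, z ^ (j+1) * fRa a (j+1) := step1
        _ ≤ (z⁻¹) ^ n * 1 := by
            apply mul_le_mul_of_nonneg_left ?_ (by positivity)
            calc ∑ j ∈ Finset.range n, z ^ (j+1) * fRa a (j+1)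
                ≤ 1 - Pc a C l / 2 := hkey
              _ ≤ 1 := by linarith
        _ = (z⁻¹) ^ n := mul_one _

end analytic3

section part2
variable (a : ℕ → ℝ) (μ : Measure (ℤ → ℝ)) [IsProbabilityMeasure μ]


lemma meas_coord_lt (hmap : ∀ i : ℤ, μ.map (fun u => u i) = volume.restrict (Set.Ico (0:ℝ) 1))
    (i : ℤ) (c : ℝ) (hc : c ∈ Set.Ioc (0:ℝ) 1) :
    μ ((fun u : ℤ → ℝ => u i) ⁻¹' Set.Iio c) = ENNReal.ofReal c := by
  have h1 : μ ((fun u : ℤ → ℝ => u i) ⁻¹' Set.Iio c)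
      = (μ.map (fun u => u i)) (Set.Iio c) := by
    rw [Measure.map_apply (measurable_pi_apply i) measurableSet_Iio]
  rw [h1, hmap i, Measure.restrict_apply measurableSet_Iio]
  have : Set.Iio c ∩ Set.Ico (0:ℝ) 1 = Set.Ico 0 c := by
    ext x
    simp only [Set.mem_inter_iff, Set.mem_Iio, Set.mem_Ico]
    constructor
    · rintro ⟨h1, h2, h3⟩; exact ⟨h2, h1⟩
    · rintro ⟨h1, h2⟩; exact ⟨h2, h1, lt_of_lt_of_le h2 hc.2⟩
  rw [this, Real.volume_Ico, sub_zero]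

lemma meas_coord_ge (hmap : ∀ i : ℤ, μ.map (fun u => u i) = volume.restrict (Set.Ico (0:ℝ) 1))
    (i : ℤ) (c : ℝ) (hc : c ∈ Set.Ioc (0:ℝ) 1) :
    μ ((fun u : ℤ → ℝ => u i) ⁻¹' Set.Ici c) = ENNReal.ofReal (1 - c) := by
  have h1 : μ ((fun u : ℤ → ℝ => u i) ⁻¹' Set.Ici c)
      = (μ.map (fun u => u i)) (Set.Ici c) := by
    rw [Measure.map_apply (measurable_pi_apply i) measurableSet_Ici]
  rw [h1, hmap i, Measure.restrict_apply measurableSet_Ici]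
  have : Set.Ici c ∩ Set.Ico (0:ℝ) 1 = Set.Ico c 1 := by
    ext x
    simp only [Set.mem_inter_iff, Set.mem_Ici, Set.mem_Ico]
    constructor
    · rintro ⟨h1, ⟨h2, h3⟩⟩; exact ⟨h1, h3⟩
    · rintro ⟨h1, h2⟩; exact ⟨h1, le_trans hc.1.le h1, h2⟩
  rw [this, Real.volume_Ico]

end part2
section part3
variable (a : ℕ → ℝ) (μ : Measure (ℤ → ℝ)) [IsProbabilityMeasure μ]

def Bev (n j : ℕ) : Set (ℤ → ℝ) :=
  {u | (∀ k : ℕ, j < k → k < n → u (k:ℤ) < a (k-j-1)) ∧ a (n-1-j) ≤ u (n:ℤ)}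

noncomputable def bset (n j : ℕ) (i : ℤ) : Set ℝ :=
  if i = (n:ℤ) then Set.Ici (a (n-1-j)) else Set.Iio (a (i.toNat - j - 1))

lemma Bev_eq_iInter (n j : ℕ) (hjn : j < n) :
    Bev a n j = ⋂ i ∈ (Finset.Icc (j+1) n).image (fun k : ℕ => (k:ℤ)),
      (fun u : ℤ → ℝ => u i) ⁻¹' (bset a n j i) := by
  ext u
  simp only [Set.mem_iInter, Finset.mem_image, Finset.mem_Icc]
  constructor
  · rintro ⟨h1, h2⟩ i ⟨k, ⟨hk1, hk2⟩, rfl⟩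
    by_cases hk : k = n
    · subst hk
      simp only [bset, if_pos rfl, Set.mem_preimage, Set.mem_Ici]
      exact h2
    · have hkn : k < n := by omega
      simp only [bset, Set.mem_preimage]
      rw [if_neg (by exact_mod_cast hk)]
      have : ((k:ℤ)).toNat = k := Int.toNat_natCast k
      rw [this]
      exact h1 k (by omega) hkn
  · intro h
    constructor
    · intro k hk1 hk2
      have := h (k:ℤ) ⟨k, ⟨by omega, by omega⟩, rfl⟩
      simp only [bset, Set.mem_preimage] at this
      rw [if_neg (by exact_mod_cast (by omega : k ≠ n)), Int.toNat_natCast] at this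
      exact this
    · have := h (n:ℤ) ⟨n, ⟨by omega, le_rfl⟩, rfl⟩
      simp only [bset, if_pos rfl, Set.mem_preimage, Set.mem_Ici] at this
      exact this

lemma meas_Bev (ha : ∀ k, a k ∈ Set.Ioc (0:ℝ) 1)
    (hind : ProbabilityTheory.iIndepFun
      (fun i (u : ℤ → ℝ) => u i) μ)
    (hmap : ∀ i : ℤ, μ.map (fun u => u i) = volume.restrict (Set.Ico (0:ℝ) 1))
    (n j : ℕ) (hjn : j < n) :
    μ (Bev a n j) = ENNReal.ofReal (fRa a (n-j)) := by
  rw [Bev_eq_iInter a n j hjn]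
  rw [ProbabilityTheory.iIndepFun_iff_measure_inter_preimage_eq_mul.mp hind _
    (fun i _ => by unfold bset; split <;> measurability)]
  rw [Finset.prod_image (by intro x _ y _ h; exact Nat.cast_injective h)]
  have hsplit : Finset.Icc (j+1) n = insert n (Finset.Ico (j+1) n) := by
    rw [Finset.Ico_insert_right (by omega : j + 1 ≤ n)]
  rw [hsplit, Finset.prod_insert (by simp)]
  have hlast : μ ((fun u : ℤ → ℝ => u (n:ℤ)) ⁻¹' bset a n j (n:ℤ))
      = ENNReal.ofReal (1 - a (n-1-j)) := by
    rw [show bset a n j (n:ℤ) = Set.Ici (a (n-1-j)) from if_pos rfl]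
    exact meas_coord_ge μ hmap _ _ (ha _)
  have hrest : ∀ k ∈ Finset.Ico (j+1) n,
      μ ((fun u : ℤ → ℝ => u (k:ℤ)) ⁻¹' bset a n j (k:ℤ))
      = ENNReal.ofReal (a (k-j-1)) := by
    intro k hk
    rw [Finset.mem_Ico] at hk
    have : bset a n j (k:ℤ) = Set.Iio (a (k-j-1)) := by
      unfold bset
      rw [if_neg (by exact_mod_cast (by omega : k ≠ n)), Int.toNat_natCast]
    rw [this]
    exact meas_coord_lt μ hmap _ _ (ha _)
  rw [hlast, Finset.prod_congr rfl hrest, Finset.prod_Ico_eq_prod_range]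
  have : ∀ i ∈ Finset.range (n - (j+1)), ENNReal.ofReal (a (j + 1 + i - j - 1))
      = ENNReal.ofReal (a i) := by
    intro i _
    congr 2
    omega
  rw [Finset.prod_congr rfl this, ← ENNReal.ofReal_prod_of_nonneg (fun t _ => (ha t).1.le),
    mul_comm, ← ENNReal.ofReal_mul (Finset.prod_nonneg (fun t _ => (ha t).1.le))]
  unfold fRa
  have e1 : n - j - 1 = n - 1 - j := by omega
  have e2 : n - (j+1) = n - j - 1 := by omega
  rw [e2, e1]

end part3

section part4
variable (a : ℕ → ℝ) (μ : Measure (ℤ → ℝ)) [IsProbabilityMeasure μ]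

def extS (S : Finset ℤ) (v : {x // x ∈ S} → ℝ) : ℤ → ℝ :=
  fun i => if h : i ∈ S then v ⟨i, h⟩ else 0

lemma measurable_extS (S : Finset ℤ) : Measurable (extS S) := by
  apply measurable_pi_lambda
  intro i
  unfold extS
  by_cases h : i ∈ S
  · simp only [dif_pos h]; exact measurable_pi_apply _
  · simp only [dif_neg h]; exact measurable_const

lemma measurableSet_Bev (n j : ℕ) (hjn : j < n) : MeasurableSet (Bev a n j) := by
  rw [Bev_eq_iInter a n j hjn]
  apply Finset.measurableSet_biInter
  intro i _
  apply measurable_pi_apply i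
  unfold bset
  split
  · exact measurableSet_Ici
  · exact measurableSet_Iio
end part4

section part5
variable (a : ℕ → ℝ) (μ : Measure (ℤ → ℝ)) [IsProbabilityMeasure μ]

def Aev (j : ℕ) : Set (ℤ → ℝ) := {u | hoc a u 0 j = 0}

lemma meas_AB (ha : ∀ k, a k ∈ Set.Ioc (0:ℝ) 1)
    (hind : ProbabilityTheory.iIndepFun
      (fun i (u : ℤ → ℝ) => u i) μ)
    (hmap : ∀ i : ℤ, μ.map (fun u => u i) = volume.restrict (Set.Ico (0:ℝ) 1))
    (n j : ℕ) (hjn : j < n) :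
    μ (Aev a j ∩ Bev a n j) = μ (Aev a j) * ENNReal.ofReal (fRa a (n-j)) := by
  classical
  set S₁ : Finset ℤ := (Finset.Icc 1 j).image (fun k : ℕ => (k:ℤ)) with hS₁
  set S₂ : Finset ℤ := (Finset.Icc (j+1) n).image (fun k : ℕ => (k:ℤ)) with hS₂
  have hdisj : Disjoint S₁ S₂ := by
    rw [Finset.disjoint_left]
    rintro i hi1 hi2
    rw [hS₁, Finset.mem_image] at hi1
    rw [hS₂, Finset.mem_image] at hi2
    obtain ⟨k, hk, rfl⟩ := hi1
    obtain ⟨k', hk', e⟩ := hi2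
    rw [Finset.mem_Icc] at hk hk'
    have : k' = k := by exact_mod_cast e
    omega
  have hIndep := hind.indepFun_finset S₁ S₂ hdisj (fun i => measurable_pi_apply i)
  set sA : Set ({x // x ∈ S₁} → ℝ) := (fun v => hoc a (extS S₁ v) 0 j) ⁻¹' {0} with hsA
  set sB : Set ({x // x ∈ S₂} → ℝ) := extS S₂ ⁻¹' (Bev a n j) with hsB
  have hmA : MeasurableSet sA :=
    ((measurable_hoc a j).comp (measurable_extS S₁)) (measurableSet_singleton 0)
  have hmB : MeasurableSet sB := (measurable_extS S₂) (measurableSet_Bev a n j hjn)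
  have hA : (fun u (i : {x // x ∈ S₁}) => u (i:ℤ)) ⁻¹' sA = Aev a j := by
    ext u
    simp only [hsA, Set.mem_preimage, Set.mem_singleton_iff, Aev, Set.mem_setOf_eq]
    have := hoc_congr a (extS S₁ (fun i : {x // x ∈ S₁} => u (i:ℤ))) u j ?_
    · rw [this]
    · intro i h1 h2
      have hmem : (i:ℤ) ∈ S₁ := by
        rw [hS₁, Finset.mem_image]
        exact ⟨i, Finset.mem_Icc.mpr ⟨h1, h2⟩, rfl⟩
      simp only [extS, dif_pos hmem]
  have hB : (fun u (i : {x // x ∈ S₂}) => u (i:ℤ)) ⁻¹' sB = Bev a n j := by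
    ext u
    simp only [hsB, Set.mem_preimage]
    have hw : ∀ k : ℕ, j < k → k ≤ n →
        extS S₂ (fun i : {x // x ∈ S₂} => u (i:ℤ)) (k:ℤ) = u (k:ℤ) := by
      intro k h1 h2
      have hmem : (k:ℤ) ∈ S₂ := by
        rw [hS₂, Finset.mem_image]
        exact ⟨k, Finset.mem_Icc.mpr ⟨by omega, h2⟩, rfl⟩
      simp only [extS, dif_pos hmem]
    constructor
    · rintro ⟨h1, h2⟩
      refine ⟨fun k hk1 hk2 => ?_, ?_⟩
      · rw [← hw k hk1 hk2.le]; exact h1 k hk1 hk2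
      · rw [← hw n (by omega) le_rfl]; exact h2
    · rintro ⟨h1, h2⟩
      refine ⟨fun k hk1 hk2 => ?_, ?_⟩
      · rw [hw k hk1 hk2.le]; exact h1 k hk1 hk2
      · rw [hw n (by omega) le_rfl]; exact h2
  have := hIndep.measure_inter_preimage_eq_mul sA sB hmA hmB
  rw [hA, hB] at this
  rw [this, meas_Bev a μ ha hind hmap n j hjn]

lemma rho_le_sum (ha : ∀ k, a k ∈ Set.Ioc (0:ℝ) 1)
    (hind : ProbabilityTheory.iIndepFun
      (fun i (u : ℤ → ℝ) => u i) μ)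
    (hmap : ∀ i : ℤ, μ.map (fun u => u i) = volume.restrict (Set.Ico (0:ℝ) 1))
    (n : ℕ) (hn : 1 ≤ n) :
    μ (Aev a n) ≤ ∑ j ∈ Finset.range n, μ (Aev a j) * ENNReal.ofReal (fRa a (n-j)) := by
  have hsub : Aev a n ⊆ ⋃ j ∈ Finset.range n, (Aev a j ∩ Bev a n j) := by
    intro u hu
    obtain ⟨j, hj, h0, h1, h2⟩ := hoc_cover a u n hn hu
    exact Set.mem_biUnion (Finset.mem_range.mpr hj) ⟨h0, h1, h2⟩
  calc μ (Aev a n) ≤ μ (⋃ j ∈ Finset.range n, (Aev a j ∩ Bev a n j)) := measure_mono hsub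
    _ ≤ ∑ j ∈ Finset.range n, μ (Aev a j ∩ Bev a n j) := measure_biUnion_finset_le _ _
    _ = ∑ j ∈ Finset.range n, μ (Aev a j) * ENNReal.ofReal (fRa a (n-j)) := by
        apply Finset.sum_congr rfl
        intro j hj
        exact meas_AB a μ ha hind hmap n j (Finset.mem_range.mp hj)
end part5

/-- if `1 - a_n` decreases exponentially then so does `ρ_n`. -/
theorem stmt8 (a : ℕ → ℝ) (ha : ∀ k, a k ∈ Set.Ioc (0:ℝ) 1) (hmono : Monotone a)
    (hlim : Tendsto a atTop (nhds 1))
    (μ : Measure (ℤ → ℝ)) [IsProbabilityMeasure μ] (hiid : IsIIDUniform μ)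
    (C : ℝ) (hC : 0 < C) (l : ℝ) (hl : l ∈ Set.Ioo (0:ℝ) 1)
    (hexp : ∀ n : ℕ, 1 - a n ≤ C * l ^ n) :
    ∃ C' : ℝ, 0 < C' ∧ ∃ l' ∈ Set.Ioo (0:ℝ) 1,
      ∀ n : ℕ, 1 ≤ n → rho a μ n ≤ ENNReal.ofReal (C' * l' ^ n) := by
  obtain ⟨hind, hmap⟩ := hiid
  set r : ℕ → ℝ := fun n => (μ (Aev a n)).toReal with hr
  have hr0 : r 0 = 1 := by
    have : Aev a 0 = Set.univ := by
      ext u; simp [Aev]; rfl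
    simp [hr, this]
  have hrpos : ∀ n, 0 ≤ r n := fun n => ENNReal.toReal_nonneg
  have hrec : ∀ n, 1 ≤ n → r n ≤ ∑ j ∈ Finset.range n, r j * fRa a (n-j) := by
    intro n hn
    have h := rho_le_sum a μ ha hind hmap n hn
    have hne : ∀ j ∈ Finset.range n,
        μ (Aev a j) * ENNReal.ofReal (fRa a (n-j)) ≠ ⊤ :=
      fun j _ => ENNReal.mul_ne_top (measure_ne_top μ _) ENNReal.ofReal_ne_top
    have hsum_ne : (∑ j ∈ Finset.range n, μ (Aev a j) * ENNReal.ofReal (fRa a (n-j))) ≠ ⊤ := by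
      rw [ENNReal.sum_ne_top]
      exact hne
    calc r n ≤ (∑ j ∈ Finset.range n, μ (Aev a j) * ENNReal.ofReal (fRa a (n-j))).toReal :=
          ENNReal.toReal_mono hsum_ne h
      _ = ∑ j ∈ Finset.range n, r j * fRa a (n-j) := by
          rw [ENNReal.toReal_sum hne]
          apply Finset.sum_congr rfl
          intro j _
          rw [ENNReal.toReal_mul, ENNReal.toReal_ofReal (fRa_nonneg a ha _)]
  have main := main_rec a C l ha hmono hC hl hexp r hr0 hrpos hrec
  obtain ⟨hz1, _, _⟩ := zc_facts a C l ha hC hl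
  have hz0 : 0 < zc a C l := lt_trans one_pos hz1
  refine ⟨1, one_pos, (zc a C l)⁻¹, ⟨inv_pos.mpr hz0, inv_lt_one_of_one_lt₀ hz1⟩, ?_⟩
  intro n hn
  have : rho a μ n = μ (Aev a n) := rfl
  rw [this, one_mul]
  exact (ENNReal.le_ofReal_iff_toReal_le (measure_ne_top μ _)
    (by positivity)).mpr (main n)
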